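/- For a nonempty closed convex set K in a real Hilbert space H and any x ∉ K, the function d_K is differentiable at x with gradient (x − Π_K(x)) / d_K(x), and this gradient has norm 1. -/

import Mathlib

open MeasureTheory Filter

local notation "⟪" x ", " y "⟫" => @inner ℝ _ _ x y

/-- For a nonempty closed convex set `K` in a real Hilbert space and `x ∉ K`
(i.e. `d_K(x) > 0`), the distance function `d_K` is differentiable at `x` with
gradient `(x − Π_K x)/d_K(x)`, which has norm one. -/
theorem hasGradient_dist_of_not_mem {H : Type*} [NormedAddCommGroup H]
    [InnerProductSpace ℝ H] [CompleteSpace H]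
    (K : Set H) (hKne : K.Nonempty) (hKcl : IsClosed K) (hKconv : Convex ℝ K)
    (P : H → H) (hPmem : ∀ x, P x ∈ K)
    (hPproj : ∀ x, ‖x - P x‖ = Metric.infDist x K)
    (x : H) (hx : 0 < Metric.infDist x K) :
    HasGradientAt (fun z => Metric.infDist z K)
        ((Metric.infDist x K)⁻¹ • (x - P x)) x ∧
      ‖(Metric.infDist x K)⁻¹ • (x - P x)‖ = 1 := by
  set d : ℝ := Metric.infDist x K with hd
  have hd0 : d ≠ 0 := ne_of_gt hx
  set v : H := x - P x with hv
  have hvd : ‖v‖ = d := hPproj x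
  set u : H := d⁻¹ • v with hu
  have hun : ‖u‖ = 1 := by
    rw [hu, norm_smul, Real.norm_eq_abs, abs_of_pos (inv_pos.mpr hx), hvd,
      inv_mul_cancel₀ hd0]
  -- separation property of the projection at x
  have hsep : ∀ k ∈ K, ⟪v, k - P x⟫ ≤ 0 := by
    have hinf : ‖x - P x‖ = ⨅ w : K, ‖x - w‖ := by
      rw [hPproj x, Metric.infDist_eq_iInf]
      simp only [dist_eq_norm]
    exact (norm_eq_iInf_iff_real_inner_le_zero hKconv (hPmem x)).mp hinf
  -- lower bound
  have hlow : ∀ z : H, 0 ≤ Metric.infDist z K - d - ⟪u, z - x⟫ := by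
    intro z
    have h1 : Metric.infDist z K = ‖z - P z‖ := (hPproj z).symm
    have h2 : ⟪z - P z, u⟫ ≤ ‖z - P z‖ := by
      calc ⟪z - P z, u⟫ ≤ ‖z - P z‖ * ‖u‖ := real_inner_le_norm _ _
        _ = ‖z - P z‖ := by rw [hun, mul_one]
    have hdecomp : z - P z = (z - x) + ((x - P x) + (P x - P z)) := by abel
    have h3 : ⟪z - P z, u⟫
        = ⟪z - x, u⟫ + (⟪x - P x, u⟫ + ⟪P x - P z, u⟫) := by
      rw [hdecomp, inner_add_left, inner_add_left]
    have h4 : ⟪x - P x, u⟫ = d := by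
      rw [hu, real_inner_smul_right, ← hv, real_inner_self_eq_norm_sq, hvd]
      field_simp
    have h5 : 0 ≤ ⟪P x - P z, u⟫ := by
      have hz6 := hsep (P z) (hPmem z)
      rw [hu, real_inner_smul_right]
      have heq : ⟪P x - P z, v⟫ = -⟪v, P z - P x⟫ := by
        rw [real_inner_comm, show P x - P z = -(P z - P x) from by abel, inner_neg_right]
      rw [heq]
      have h0 : (0:ℝ) ≤ -⟪v, P z - P x⟫ := by linarith
      positivity
    have h6 : ⟪u, z - x⟫ = ⟪z - x, u⟫ := real_inner_comm _ _
    rw [h1, h6]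
    linarith
  -- upper bound
  have hup : ∀ z : H, Metric.infDist z K - d - ⟪u, z - x⟫ ≤ ‖z - x‖^2 / (2*d) := by
    intro z
    set A : ℝ := ⟪v, z - x⟫ with hA
    set n : ℝ := ‖z - x‖ with hn
    set L : ℝ := ‖z - P x‖ with hL
    have hIL : Metric.infDist z K ≤ L := by
      rw [hL, ← dist_eq_norm]
      exact Metric.infDist_le_dist_of_mem (hPmem x)
    have hL2 : L^2 = n^2 + 2*A + d^2 := by
      rw [hL, show z - P x = (z - x) + v by rw [hv]; abel, norm_add_sq_real, hvd,
        real_inner_comm]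
    have hAlb : -(d*n) ≤ A := by
      have h := real_inner_le_norm (-v) (z - x)
      rw [inner_neg_left, norm_neg, hvd] at h
      linarith
    have hL0 : 0 ≤ L := norm_nonneg _
    have hn0 : 0 ≤ n := norm_nonneg _
    have hkey : 2*d*L ≤ 2*d^2 + 2*A + n^2 := by
      have hS0 : 0 ≤ 2*d^2 + 2*A + n^2 := by nlinarith [sq_nonneg (d - n)]
      nlinarith [hL2, sq_nonneg (2*A + n^2), sq_nonneg (2*d^2 + 2*A + n^2 - 2*d*L),
        mul_nonneg hS0 (mul_nonneg (mul_nonneg (by norm_num : (0:ℝ) ≤ 2) hx.le) hL0)]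
    have hinner : ⟪u, z - x⟫ = d⁻¹ * A := by rw [hu, real_inner_smul_left]
    rw [hinner, le_div_iff₀ (by positivity : (0:ℝ) < 2*d)]
    have hAd : d⁻¹ * A * (2*d) = 2*A := by field_simp
    have hIL2 : Metric.infDist z K * (2*d) ≤ L * (2*d) := by
      exact mul_le_mul_of_nonneg_right hIL (by positivity)
    nlinarith [hkey, hIL2]
  constructor
  · rw [hasGradientAt_iff_isLittleO, Asymptotics.isLittleO_iff]
    intro ε hε
    have hev : ∀ᶠ z in nhds x, ‖z - x‖ ≤ 2*d*ε := by
      have hb := Metric.ball_mem_nhds x (by positivity : (0:ℝ) < 2*d*ε)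
      filter_upwards [hb] with z hz
      rw [Metric.mem_ball, dist_eq_norm] at hz
      linarith
    filter_upwards [hev] with z hz
    rw [Real.norm_eq_abs, abs_of_nonneg (hlow z)]
    have h1 := hup z
    have h2 : ‖z - x‖^2 / (2*d) ≤ ε * ‖z - x‖ := by
      rw [div_le_iff₀ (by positivity : (0:ℝ) < 2*d)]
      nlinarith [norm_nonneg (z - x)]
    linarith
  · exact hun
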